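/- Let (E, ℰ, σ) be a σ-finite measure space. For i = 1, 2, let p_i be a strictly positive probability density with respect to σ, let q_i : E×E → (0,∞) be measurable with ∫_E q_i(x,y) σ(dy) = 1 for every x ∈ E, set P_i(dx) = p_i(x)σ(dx) and Q_i(x,dy) = q_i(x,y)σ(dy), and let K_i be the Metropolis–Hastings transition kernel with proposal Q_i and target P_i. Then ‖P_1⊗K_1 − P_2⊗K_2‖_TV ≤ 6·‖P_1⊗Q_1 − P_2⊗Q_2‖_TV. -/

import Mathlib

open MeasureTheory ENNReal

noncomputable section

/-- The Metropolis–Hastings transition kernel (as a measure-valued map) with proposal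
density `q` and target density `p`, with respect to a reference measure `σ`. -/
def mhKernel {E : Type} [MeasurableSpace E] (σ : Measure E) (p : E → ℝ) (q : E → E → ℝ)
    (x : E) : Measure E :=
  σ.withDensity (fun y => ENNReal.ofReal (min 1 ((p y * q y x) / (p x * q x y)) * q x y)) +
    (1 - ∫⁻ y, ENNReal.ofReal (min 1 ((p y * q y x) / (p x * q x y)) * q x y) ∂σ) •
      Measure.dirac x

/-- The set function `S ↦ (P ⊗ K)(S)` on `E × E`, for an initial measure `P` and a
measure-valued kernel `K`. -/
def prodLaw {E : Type} [MeasurableSpace E] (P : Measure E) (K : E → Measure E)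
    (S : Set (E × E)) : ℝ≥0∞ :=
  ∫⁻ x, K x (Prod.mk x ⁻¹' S) ∂P

section Helpers

lemma enn_min_tsub {a b c d : ℝ≥0∞} : min a b - min c d ≤ (a - c) + (b - d) := by
  rcases min_cases c d with ⟨h, _⟩ | ⟨h, _⟩
  · rw [h]
    exact le_trans (tsub_le_tsub_right (min_le_left a b) c) le_self_add
  · rw [h]
    exact le_trans (tsub_le_tsub_right (min_le_right a b) d) le_add_self

lemma enn_tsub_tsub {a b c d : ℝ≥0∞} : (a - c) - (b - d) ≤ (a - b) + (d - c) := by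
  rw [tsub_le_iff_right, tsub_le_iff_right]
  calc a ≤ (a - b) + b := le_tsub_add
    _ ≤ (a - b) + ((b - d) + d) := by gcongr; exact le_tsub_add
    _ ≤ (a - b) + ((b - d) + ((d - c) + c)) := by gcongr; exact le_tsub_add
    _ = (a - b) + (d - c) + (b - d) + c := by ring

lemma enn_ofReal_min (a b : ℝ) :
    ENNReal.ofReal (min a b) = min (ENNReal.ofReal a) (ENNReal.ofReal b) := by
  rcases le_total a b with h | h
  · rw [min_eq_left h, min_eq_left (ENNReal.ofReal_le_ofReal h)]
  · rw [min_eq_right h, min_eq_right (ENNReal.ofReal_le_ofReal h)]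

variable {α : Type*} [MeasurableSpace α] {μ : Measure α}

lemma lintegral_tsub_le_of_pair {u v : α → ℝ≥0∞} (hu : Measurable u) (hv : Measurable v)
    (hui : ∫⁻ a, u a ∂μ ≠ ⊤) {t : ℝ}
    (h : |(∫⁻ a in {z | v z < u z}, u a ∂μ).toReal -
          (∫⁻ a in {z | v z < u z}, v a ∂μ).toReal| ≤ t) :
    ∫⁻ a, (u a - v a) ∂μ ≤ ENNReal.ofReal t := by
  set S := {z | v z < u z} with hSdef
  have hSm : MeasurableSet S := measurableSet_lt hv hu
  have key : ∀ a, S.indicator u a = S.indicator v a + (u a - v a) := by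
    intro a
    by_cases ha : a ∈ S
    · simp only [Set.indicator_of_mem ha]
      rw [add_comm, tsub_add_cancel_of_le (le_of_lt ha)]
    · have hle : u a ≤ v a := not_lt.1 ha
      simp [Set.indicator_of_notMem ha, tsub_eq_zero_of_le hle]
  have hadd : ∫⁻ a, S.indicator u a ∂μ
      = ∫⁻ a, S.indicator v a ∂μ + ∫⁻ a, (u a - v a) ∂μ := by
    rw [← lintegral_add_left (hv.indicator hSm)]
    exact lintegral_congr key
  have h1 : ∫⁻ a, S.indicator u a ∂μ ≠ ⊤ :=
    ne_top_of_le_ne_top hui (lintegral_mono fun a => Set.indicator_le_self _ _ a)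
  have h2 : ∫⁻ a, S.indicator v a ∂μ ≠ ⊤ := by
    refine ne_top_of_le_ne_top h1 ?_
    refine lintegral_mono fun a => ?_
    by_cases ha : a ∈ S
    · simp only [Set.indicator_of_mem ha]; exact le_of_lt ha
    · simp [Set.indicator_of_notMem ha]
  have h3 : ∫⁻ a, (u a - v a) ∂μ ≠ ⊤ := by
    intro hcon
    rw [hcon, add_top] at hadd
    exact h1 hadd
  have htr : (∫⁻ a, (u a - v a) ∂μ).toReal
      = (∫⁻ a in S, u a ∂μ).toReal - (∫⁻ a in S, v a ∂μ).toReal := by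
    rw [← lintegral_indicator hSm, ← lintegral_indicator hSm, hadd,
      ENNReal.toReal_add h2 h3]
    ring
  have hle : (∫⁻ a, (u a - v a) ∂μ).toReal ≤ t := by
    rw [htr]; exact (abs_le.1 h).2
  calc ∫⁻ a, (u a - v a) ∂μ = ENNReal.ofReal ((∫⁻ a, (u a - v a) ∂μ).toReal) :=
        (ENNReal.ofReal_toReal h3).symm
    _ ≤ ENNReal.ofReal t := ENNReal.ofReal_le_ofReal hle

end Helpers

section ProdLawLemmas

variable {E : Type} [MeasurableSpace E] (σ : Measure E) [SigmaFinite σ]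

lemma uncurry_meas {q : E → E → ℝ} (hq : Measurable (Function.uncurry q)) :
    Measurable fun z : E × E => q z.1 z.2 := hq

lemma prodLaw_withDensity (p : E → ℝ) (q : E → E → ℝ)
    (hpm : Measurable p) (hqm : Measurable (Function.uncurry q)) (hp : ∀ x, 0 ≤ p x)
    {S : Set (E × E)} (hS : MeasurableSet S) :
    prodLaw (σ.withDensity fun x => ENNReal.ofReal (p x))
      (fun x => σ.withDensity fun y => ENNReal.ofReal (q x y)) S
    = ∫⁻ z in S, ENNReal.ofReal (p z.1 * q z.1 z.2) ∂(σ.prod σ) := by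
  have hqm' : Measurable fun z : E × E => ENNReal.ofReal (q z.1 z.2) :=
    (uncurry_meas hqm).ennreal_ofReal
  have hGm : Measurable (S.indicator fun z : E × E => ENNReal.ofReal (q z.1 z.2)) :=
    hqm'.indicator hS
  have hstep : ∀ x : E, (σ.withDensity fun y => ENNReal.ofReal (q x y)) (Prod.mk x ⁻¹' S)
      = ∫⁻ y, S.indicator (fun z : E × E => ENNReal.ofReal (q z.1 z.2)) (x, y) ∂σ := by
    intro x
    rw [withDensity_apply _ (measurable_prodMk_left hS),
      ← lintegral_indicator (measurable_prodMk_left hS)]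
    refine lintegral_congr fun y => ?_
    rfl
  have hFm : Measurable (fun z : E × E => ENNReal.ofReal (p z.1 * q z.1 z.2)) :=
    ((hpm.comp measurable_fst).mul (uncurry_meas hqm)).ennreal_ofReal
  rw [prodLaw, lintegral_congr hstep,
    lintegral_withDensity_eq_lintegral_mul σ (hpm.ennreal_ofReal)
      hGm.lintegral_prod_right']
  rw [← lintegral_indicator hS, lintegral_prod _ (hFm.indicator hS).aemeasurable]
  refine lintegral_congr fun x => ?_
  simp only [Pi.mul_apply]
  rw [show ENNReal.ofReal (p x) *
        ∫⁻ y, S.indicator (fun z : E × E => ENNReal.ofReal (q z.1 z.2)) (x, y) ∂σ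
      = ∫⁻ y, ENNReal.ofReal (p x) *
          S.indicator (fun z : E × E => ENNReal.ofReal (q z.1 z.2)) (x, y) ∂σ from
    (lintegral_const_mul _ (hGm.comp measurable_prodMk_left)).symm]
  refine lintegral_congr fun y => ?_
  by_cases h : (x, y) ∈ S
  · simp [Set.indicator_of_mem h, ENNReal.ofReal_mul (hp x)]
  · simp [Set.indicator_of_notMem h]

lemma mh_accept_id' {c q d : ℝ} (hc : 0 < c) (hq : 0 < q) :
    c * (min 1 (d / (c * q)) * q) = min (c * q) d := by
  have hcq : 0 < c * q := mul_pos hc hq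
  rcases le_total d (c * q) with h | h
  · rw [min_eq_right ((div_le_one hcq).2 h), min_eq_right h]
    field_simp
  · rw [min_eq_left ((one_le_div hcq).2 h), min_eq_left h]
    ring

lemma prodLaw_mhKernel (p : E → ℝ) (q : E → E → ℝ)
    (hpm : Measurable p) (hqm : Measurable (Function.uncurry q))
    (hp : ∀ x, 0 < p x) (hq : ∀ x y, 0 < q x y)
    {S : Set (E × E)} (hS : MeasurableSet S) :
    prodLaw (σ.withDensity fun x => ENNReal.ofReal (p x)) (mhKernel σ p q) S
    = ∫⁻ z in S, ENNReal.ofReal (min (p z.1 * q z.1 z.2) (p z.2 * q z.2 z.1)) ∂(σ.prod σ)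
      + ∫⁻ x in {x : E | (x, x) ∈ S},
          (ENNReal.ofReal (p x)
            - ∫⁻ y, ENNReal.ofReal (min (p x * q x y) (p y * q y x)) ∂σ) ∂σ := by
  set A : E × E → ℝ≥0∞ := fun z =>
    ENNReal.ofReal (min 1 ((p z.2 * q z.2 z.1) / (p z.1 * q z.1 z.2)) * q z.1 z.2) with hA
  set M : E × E → ℝ≥0∞ := fun z =>
    ENNReal.ofReal (min (p z.1 * q z.1 z.2) (p z.2 * q z.2 z.1)) with hM
  have hq1 : Measurable fun z : E × E => q z.1 z.2 := uncurry_meas hqm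
  have hq2 : Measurable fun z : E × E => q z.2 z.1 := (uncurry_meas hqm).comp measurable_swap
  have hf1 : Measurable fun z : E × E => p z.1 * q z.1 z.2 :=
    (hpm.comp measurable_fst).mul hq1
  have hf2 : Measurable fun z : E × E => p z.2 * q z.2 z.1 :=
    (hpm.comp measurable_snd).mul hq2
  have hAm : Measurable A :=
    ((measurable_const.min (hf2.div hf1)).mul hq1).ennreal_ofReal
  have hMm : Measurable M := (hf1.min hf2).ennreal_ofReal
  have key : ∀ x y, ENNReal.ofReal (p x) * A (x, y) = M (x, y) := by
    intro x y
    rw [hA, hM, ← ENNReal.ofReal_mul (hp x).le]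
    exact congrArg ENNReal.ofReal (mh_accept_id' (hp x) (hq x y))
  set D : Set E := {x : E | (x, x) ∈ S} with hDdef
  have hD : MeasurableSet D := (measurable_id.prodMk measurable_id) hS
  set φ : E → ℝ≥0∞ := fun x => ∫⁻ y, M (x, y) ∂σ with hφ
  have hφm : Measurable φ := hMm.lintegral_prod_right'
  have step1 : ∀ x, mhKernel σ p q x (Prod.mk x ⁻¹' S)
      = (∫⁻ y, S.indicator A (x, y) ∂σ) + (1 - ∫⁻ y, A (x, y) ∂σ) * D.indicator 1 x := by
    intro x
    have hBm : MeasurableSet (Prod.mk x ⁻¹' S) := measurable_prodMk_left hS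
    rw [mhKernel, Measure.add_apply, Measure.smul_apply, smul_eq_mul,
      Measure.dirac_apply' x hBm, withDensity_apply _ hBm, ← lintegral_indicator hBm]
    rfl
  have hg0m : Measurable fun x =>
      (∫⁻ y, S.indicator A (x, y) ∂σ) + (1 - ∫⁻ y, A (x, y) ∂σ) * D.indicator 1 x :=
    ((hAm.indicator hS).lintegral_prod_right').add
      ((measurable_const.sub hAm.lintegral_prod_right').mul (measurable_one.indicator hD))
  rw [prodLaw, lintegral_congr step1,
    lintegral_withDensity_eq_lintegral_mul σ hpm.ennreal_ofReal hg0m]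
  have step2 : ∀ x, (fun x => ENNReal.ofReal (p x)) x *
        ((∫⁻ y, S.indicator A (x, y) ∂σ) + (1 - ∫⁻ y, A (x, y) ∂σ) * D.indicator 1 x)
      = (∫⁻ y, S.indicator M (x, y) ∂σ)
        + D.indicator (fun x => ENNReal.ofReal (p x) - φ x) x := by
    intro x
    have hc1 : ENNReal.ofReal (p x) * ∫⁻ y, S.indicator A (x, y) ∂σ
        = ∫⁻ y, ENNReal.ofReal (p x) * S.indicator A (x, y) ∂σ :=
      (lintegral_const_mul _ ((hAm.indicator hS).comp measurable_prodMk_left)).symm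
    have hc2 : ENNReal.ofReal (p x) * ∫⁻ y, A (x, y) ∂σ
        = ∫⁻ y, ENNReal.ofReal (p x) * A (x, y) ∂σ :=
      (lintegral_const_mul _ (hAm.comp measurable_prodMk_left)).symm
    rw [mul_add, ← mul_assoc, hc1]
    congr 1
    · refine lintegral_congr fun y => ?_
      by_cases h : (x, y) ∈ S
      · rw [Set.indicator_of_mem h, Set.indicator_of_mem h, key]
      · rw [Set.indicator_of_notMem h, Set.indicator_of_notMem h, mul_zero]
    · have hkey2 : ENNReal.ofReal (p x) * (1 - ∫⁻ y, A (x, y) ∂σ)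
          = ENNReal.ofReal (p x) - φ x := by
        rw [ENNReal.mul_sub (fun _ _ => ENNReal.ofReal_ne_top), mul_one, hc2]
        congr 1
        exact lintegral_congr fun y => key x y
      rw [hkey2]
      by_cases h : x ∈ D
      · simp [Set.indicator_of_mem h]
      · simp [Set.indicator_of_notMem h]
  calc ∫⁻ x, ((fun x => ENNReal.ofReal (p x)) * fun x =>
          (∫⁻ y, S.indicator A (x, y) ∂σ) + (1 - ∫⁻ y, A (x, y) ∂σ) * D.indicator 1 x) x ∂σ
      = ∫⁻ x, (∫⁻ y, S.indicator M (x, y) ∂σ)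
          + D.indicator (fun x => ENNReal.ofReal (p x) - φ x) x ∂σ := lintegral_congr step2
    _ = (∫⁻ z in S, M z ∂(σ.prod σ)) + ∫⁻ x in D, (ENNReal.ofReal (p x) - φ x) ∂σ := by
        rw [lintegral_add_left (hMm.indicator hS).lintegral_prod_right',
          ← lintegral_prod _ (hMm.indicator hS).aemeasurable, lintegral_indicator hS,
          lintegral_indicator hD]

lemma marginal_prod {F : E × E → ℝ≥0∞} (hF : Measurable F) {g : E → ℝ≥0∞}
    (hline : ∀ x, ∫⁻ y, F (x, y) ∂σ = g x) {A : Set E} (hA : MeasurableSet A) :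
    ∫⁻ z in A ×ˢ Set.univ, F z ∂(σ.prod σ) = ∫⁻ x in A, g x ∂σ := by
  have hAU : MeasurableSet (A ×ˢ (Set.univ : Set E)) := hA.prod MeasurableSet.univ
  rw [← lintegral_indicator hAU, lintegral_prod _ (hF.indicator hAU).aemeasurable,
    ← lintegral_indicator hA]
  refine lintegral_congr fun x => ?_
  by_cases hx : x ∈ A
  · rw [Set.indicator_of_mem hx, ← hline x]
    refine lintegral_congr fun y => ?_
    rw [Set.indicator_of_mem (Set.mem_prod.2 ⟨hx, Set.mem_univ y⟩)]
  · rw [Set.indicator_of_notMem hx]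
    calc ∫⁻ y, (A ×ˢ Set.univ).indicator F (x, y) ∂σ = ∫⁻ _, (0 : ℝ≥0∞) ∂σ :=
          lintegral_congr fun y =>
            Set.indicator_of_notMem (fun hmem => hx hmem.1) F
      _ = 0 := lintegral_zero

end ProdLawLemmas

/-- Total variation bound for Metropolis–Hastings chains:
`‖P₁ ⊗ K₁ − P₂ ⊗ K₂‖_TV ≤ 6 ‖P₁ ⊗ Q₁ − P₂ ⊗ Q₂‖_TV`, stated as: any uniform bound `t`
on the proposal side yields the bound `6t` on the Metropolis–Hastings side. -/
theorem mh_totalVariation_bound {E : Type} [MeasurableSpace E] (σ : Measure E) [SigmaFinite σ]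
    (p₁ p₂ : E → ℝ) (q₁ q₂ : E → E → ℝ)
    (hp₁m : Measurable p₁) (hp₂m : Measurable p₂)
    (hp₁ : ∀ x, 0 < p₁ x) (hp₂ : ∀ x, 0 < p₂ x)
    (hp₁i : ∫⁻ x, ENNReal.ofReal (p₁ x) ∂σ = 1) (hp₂i : ∫⁻ x, ENNReal.ofReal (p₂ x) ∂σ = 1)
    (hq₁m : Measurable (Function.uncurry q₁)) (hq₂m : Measurable (Function.uncurry q₂))
    (hq₁ : ∀ x y, 0 < q₁ x y) (hq₂ : ∀ x y, 0 < q₂ x y)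
    (hq₁i : ∀ x, ∫⁻ y, ENNReal.ofReal (q₁ x y) ∂σ = 1)
    (hq₂i : ∀ x, ∫⁻ y, ENNReal.ofReal (q₂ x y) ∂σ = 1)
    (t : ℝ)
    (hprop : ∀ S : Set (E × E), MeasurableSet S →
      |(prodLaw (σ.withDensity fun x => ENNReal.ofReal (p₁ x))
          (fun x => σ.withDensity fun y => ENNReal.ofReal (q₁ x y)) S).toReal -
        (prodLaw (σ.withDensity fun x => ENNReal.ofReal (p₂ x))
          (fun x => σ.withDensity fun y => ENNReal.ofReal (q₂ x y)) S).toReal| ≤ t) :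
    ∀ S : Set (E × E), MeasurableSet S →
      |(prodLaw (σ.withDensity fun x => ENNReal.ofReal (p₁ x)) (mhKernel σ p₁ q₁) S).toReal -
        (prodLaw (σ.withDensity fun x => ENNReal.ofReal (p₂ x)) (mhKernel σ p₂ q₂) S).toReal| ≤
      6 * t := by
  intro S hS
  have ht0 : 0 ≤ t := by
    have h0 := hprop ∅ MeasurableSet.empty
    simpa [prodLaw] using h0
  set c : ℝ≥0∞ := ENNReal.ofReal t with hc
  set μ2 : Measure (E × E) := σ.prod σ with hμ2
  -- the basic functions
  set F₁ : E × E → ℝ≥0∞ := fun z => ENNReal.ofReal (p₁ z.1 * q₁ z.1 z.2) with hF₁def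
  set F₂ : E × E → ℝ≥0∞ := fun z => ENNReal.ofReal (p₂ z.1 * q₂ z.1 z.2) with hF₂def
  set M₁ : E × E → ℝ≥0∞ := fun z =>
    ENNReal.ofReal (min (p₁ z.1 * q₁ z.1 z.2) (p₁ z.2 * q₁ z.2 z.1)) with hM₁def
  set M₂ : E × E → ℝ≥0∞ := fun z =>
    ENNReal.ofReal (min (p₂ z.1 * q₂ z.1 z.2) (p₂ z.2 * q₂ z.2 z.1)) with hM₂def
  set Φ₁ : E → ℝ≥0∞ := fun x => ∫⁻ y, M₁ (x, y) ∂σ with hΦ₁def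
  set Φ₂ : E → ℝ≥0∞ := fun x => ∫⁻ y, M₂ (x, y) ∂σ with hΦ₂def
  set H₁ : E → ℝ≥0∞ := fun x => ENNReal.ofReal (p₁ x) - Φ₁ x with hH₁def
  set H₂ : E → ℝ≥0∞ := fun x => ENNReal.ofReal (p₂ x) - Φ₂ x with hH₂def
  set D : Set E := {x : E | (x, x) ∈ S} with hDdef
  have hD : MeasurableSet D := (measurable_id.prodMk measurable_id) hS
  -- measurability
  have hf₁ : Measurable fun z : E × E => p₁ z.1 * q₁ z.1 z.2 :=
    (hp₁m.comp measurable_fst).mul (uncurry_meas hq₁m)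
  have hf₂ : Measurable fun z : E × E => p₂ z.1 * q₂ z.1 z.2 :=
    (hp₂m.comp measurable_fst).mul (uncurry_meas hq₂m)
  have hf₁s : Measurable fun z : E × E => p₁ z.2 * q₁ z.2 z.1 :=
    (hp₁m.comp measurable_snd).mul ((uncurry_meas hq₁m).comp measurable_swap)
  have hf₂s : Measurable fun z : E × E => p₂ z.2 * q₂ z.2 z.1 :=
    (hp₂m.comp measurable_snd).mul ((uncurry_meas hq₂m).comp measurable_swap)
  have hF₁m : Measurable F₁ := hf₁.ennreal_ofReal
  have hF₂m : Measurable F₂ := hf₂.ennreal_ofReal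
  have hM₁m : Measurable M₁ := (hf₁.min hf₁s).ennreal_ofReal
  have hM₂m : Measurable M₂ := (hf₂.min hf₂s).ennreal_ofReal
  have hΦ₁m : Measurable Φ₁ := hM₁m.lintegral_prod_right'
  have hΦ₂m : Measurable Φ₂ := hM₂m.lintegral_prod_right'
  have hH₁m : Measurable H₁ := hp₁m.ennreal_ofReal.sub hΦ₁m
  have hH₂m : Measurable H₂ := hp₂m.ennreal_ofReal.sub hΦ₂m
  -- marginals
  have hline₁ : ∀ x, ∫⁻ y, F₁ (x, y) ∂σ = ENNReal.ofReal (p₁ x) := by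
    intro x
    have hqx : Measurable fun y => ENNReal.ofReal (q₁ x y) :=
      ((uncurry_meas hq₁m).comp measurable_prodMk_left).ennreal_ofReal
    calc ∫⁻ y, F₁ (x, y) ∂σ
        = ∫⁻ y, ENNReal.ofReal (p₁ x) * ENNReal.ofReal (q₁ x y) ∂σ :=
          lintegral_congr fun y => ENNReal.ofReal_mul (hp₁ x).le
      _ = ENNReal.ofReal (p₁ x) * ∫⁻ y, ENNReal.ofReal (q₁ x y) ∂σ :=
          lintegral_const_mul _ hqx
      _ = ENNReal.ofReal (p₁ x) := by rw [hq₁i x, mul_one]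
  have hline₂ : ∀ x, ∫⁻ y, F₂ (x, y) ∂σ = ENNReal.ofReal (p₂ x) := by
    intro x
    have hqx : Measurable fun y => ENNReal.ofReal (q₂ x y) :=
      ((uncurry_meas hq₂m).comp measurable_prodMk_left).ennreal_ofReal
    calc ∫⁻ y, F₂ (x, y) ∂σ
        = ∫⁻ y, ENNReal.ofReal (p₂ x) * ENNReal.ofReal (q₂ x y) ∂σ :=
          lintegral_congr fun y => ENNReal.ofReal_mul (hp₂ x).le
      _ = ENNReal.ofReal (p₂ x) * ∫⁻ y, ENNReal.ofReal (q₂ x y) ∂σ :=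
          lintegral_const_mul _ hqx
      _ = ENNReal.ofReal (p₂ x) := by rw [hq₂i x, mul_one]
  have hFtot₁ : ∫⁻ z, F₁ z ∂μ2 = 1 := by
    rw [hμ2, lintegral_prod _ hF₁m.aemeasurable]
    rw [show (∫⁻ x, ∫⁻ y, F₁ (x, y) ∂σ ∂σ) = ∫⁻ x, ENNReal.ofReal (p₁ x) ∂σ from
      lintegral_congr hline₁, hp₁i]
  have hFtot₂ : ∫⁻ z, F₂ z ∂μ2 = 1 := by
    rw [hμ2, lintegral_prod _ hF₂m.aemeasurable]
    rw [show (∫⁻ x, ∫⁻ y, F₂ (x, y) ∂σ ∂σ) = ∫⁻ x, ENNReal.ofReal (p₂ x) ∂σ from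
      lintegral_congr hline₂, hp₂i]
  -- proposal TV hypothesis in set-integral form
  have hprop' : ∀ T : Set (E × E), MeasurableSet T →
      |(∫⁻ z in T, F₁ z ∂μ2).toReal - (∫⁻ z in T, F₂ z ∂μ2).toReal| ≤ t := by
    intro T hT
    have h := hprop T hT
    rwa [prodLaw_withDensity σ p₁ q₁ hp₁m hq₁m (fun x => (hp₁ x).le) hT,
      prodLaw_withDensity σ p₂ q₂ hp₂m hq₂m (fun x => (hp₂ x).le) hT] at h
  -- L¹-type bounds from the hypothesis
  have hF12 : ∫⁻ z, (F₁ z - F₂ z) ∂μ2 ≤ c :=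
    lintegral_tsub_le_of_pair hF₁m hF₂m (by rw [hFtot₁]; exact one_ne_top)
      (hprop' _ (measurableSet_lt hF₂m hF₁m))
  have hF21 : ∫⁻ z, (F₂ z - F₁ z) ∂μ2 ≤ c := by
    refine lintegral_tsub_le_of_pair hF₂m hF₁m (by rw [hFtot₂]; exact one_ne_top) ?_
    have h := hprop' _ (measurableSet_lt hF₁m hF₂m)
    rwa [abs_sub_comm] at h
  have hP12 : ∫⁻ x, (ENNReal.ofReal (p₁ x) - ENNReal.ofReal (p₂ x)) ∂σ ≤ c := by
    refine lintegral_tsub_le_of_pair hp₁m.ennreal_ofReal hp₂m.ennreal_ofReal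
      (by rw [hp₁i]; exact one_ne_top) ?_
    set A : Set E := {z | ENNReal.ofReal (p₂ z) < ENNReal.ofReal (p₁ z)} with hAdef
    have hA : MeasurableSet A :=
      measurableSet_lt hp₂m.ennreal_ofReal hp₁m.ennreal_ofReal
    have h := hprop' (A ×ˢ Set.univ) (hA.prod MeasurableSet.univ)
    rwa [marginal_prod σ hF₁m hline₁ hA, marginal_prod σ hF₂m hline₂ hA] at h
  have hP21 : ∫⁻ x, (ENNReal.ofReal (p₂ x) - ENNReal.ofReal (p₁ x)) ∂σ ≤ c := by
    refine lintegral_tsub_le_of_pair hp₂m.ennreal_ofReal hp₁m.ennreal_ofReal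
      (by rw [hp₂i]; exact one_ne_top) ?_
    set A : Set E := {z | ENNReal.ofReal (p₁ z) < ENNReal.ofReal (p₂ z)} with hAdef
    have hA : MeasurableSet A :=
      measurableSet_lt hp₁m.ennreal_ofReal hp₂m.ennreal_ofReal
    have h := hprop' (A ×ˢ Set.univ) (hA.prod MeasurableSet.univ)
    rw [marginal_prod σ hF₁m hline₁ hA, marginal_prod σ hF₂m hline₂ hA] at h
    rwa [abs_sub_comm] at h
  -- pointwise min bound
  have hMsub : ∀ z : E × E, M₁ z - M₂ z ≤
      (F₁ z - F₂ z) + ((fun w => F₁ w - F₂ w) z.swap) := by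
    intro z
    have e1 : M₁ z = min (F₁ z) (F₁ z.swap) := enn_ofReal_min _ _
    have e2 : M₂ z = min (F₂ z) (F₂ z.swap) := enn_ofReal_min _ _
    rw [e1, e2]
    exact enn_min_tsub
  have hMsub' : ∀ z : E × E, M₂ z - M₁ z ≤
      (F₂ z - F₁ z) + ((fun w => F₂ w - F₁ w) z.swap) := by
    intro z
    have e1 : M₁ z = min (F₁ z) (F₁ z.swap) := enn_ofReal_min _ _
    have e2 : M₂ z = min (F₂ z) (F₂ z.swap) := enn_ofReal_min _ _
    rw [e1, e2]
    exact enn_min_tsub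
  have hswap12 : ∫⁻ z : E × E, ((fun w => F₁ w - F₂ w) z.swap) ∂μ2
      = ∫⁻ z, (F₁ z - F₂ z) ∂μ2 := by
    rw [hμ2]; exact lintegral_prod_swap (μ := σ) (ν := σ) fun w => F₁ w - F₂ w
  have hswap21 : ∫⁻ z : E × E, ((fun w => F₂ w - F₁ w) z.swap) ∂μ2
      = ∫⁻ z, (F₂ z - F₁ z) ∂μ2 := by
    rw [hμ2]; exact lintegral_prod_swap (μ := σ) (ν := σ) fun w => F₂ w - F₁ w
  have hM12 : ∫⁻ z, (M₁ z - M₂ z) ∂μ2 ≤ c + c := by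
    calc ∫⁻ z, (M₁ z - M₂ z) ∂μ2
        ≤ ∫⁻ z, ((F₁ z - F₂ z) + ((fun w => F₁ w - F₂ w) z.swap)) ∂μ2 :=
          lintegral_mono hMsub
      _ = (∫⁻ z, (F₁ z - F₂ z) ∂μ2) + ∫⁻ z, ((fun w => F₁ w - F₂ w) z.swap) ∂μ2 :=
          lintegral_add_left (hF₁m.sub hF₂m) _
      _ = (∫⁻ z, (F₁ z - F₂ z) ∂μ2) + ∫⁻ z, (F₁ z - F₂ z) ∂μ2 := by rw [hswap12]
      _ ≤ c + c := add_le_add hF12 hF12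
  have hM21 : ∫⁻ z, (M₂ z - M₁ z) ∂μ2 ≤ c + c := by
    calc ∫⁻ z, (M₂ z - M₁ z) ∂μ2
        ≤ ∫⁻ z, ((F₂ z - F₁ z) + ((fun w => F₂ w - F₁ w) z.swap)) ∂μ2 :=
          lintegral_mono hMsub'
      _ = (∫⁻ z, (F₂ z - F₁ z) ∂μ2) + ∫⁻ z, ((fun w => F₂ w - F₁ w) z.swap) ∂μ2 :=
          lintegral_add_left (hF₂m.sub hF₁m) _
      _ = (∫⁻ z, (F₂ z - F₁ z) ∂μ2) + ∫⁻ z, (F₂ z - F₁ z) ∂μ2 := by rw [hswap21]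
      _ ≤ c + c := add_le_add hF21 hF21
  -- the H bound
  have hB12 : ∫⁻ x, (H₁ x - H₂ x) ∂σ ≤ c + (c + c) := by
    calc ∫⁻ x, (H₁ x - H₂ x) ∂σ
        ≤ ∫⁻ x, ((ENNReal.ofReal (p₁ x) - ENNReal.ofReal (p₂ x)) + (Φ₂ x - Φ₁ x)) ∂σ :=
          lintegral_mono fun x => enn_tsub_tsub
      _ = (∫⁻ x, (ENNReal.ofReal (p₁ x) - ENNReal.ofReal (p₂ x)) ∂σ)
            + ∫⁻ x, (Φ₂ x - Φ₁ x) ∂σ :=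
          lintegral_add_left (hp₁m.ennreal_ofReal.sub hp₂m.ennreal_ofReal) _
      _ ≤ (∫⁻ x, (ENNReal.ofReal (p₁ x) - ENNReal.ofReal (p₂ x)) ∂σ)
            + ∫⁻ x, ∫⁻ y, (M₂ (x, y) - M₁ (x, y)) ∂σ ∂σ := by
          gcongr with x
          exact lintegral_sub_le _ _ (hM₁m.comp measurable_prodMk_left)
      _ = (∫⁻ x, (ENNReal.ofReal (p₁ x) - ENNReal.ofReal (p₂ x)) ∂σ)
            + ∫⁻ z, (M₂ z - M₁ z) ∂μ2 := by
          rw [hμ2, lintegral_prod (fun z => M₂ z - M₁ z) (hM₂m.sub hM₁m).aemeasurable]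
      _ ≤ c + (c + c) := add_le_add hP12 hM21
  have hB21 : ∫⁻ x, (H₂ x - H₁ x) ∂σ ≤ c + (c + c) := by
    calc ∫⁻ x, (H₂ x - H₁ x) ∂σ
        ≤ ∫⁻ x, ((ENNReal.ofReal (p₂ x) - ENNReal.ofReal (p₁ x)) + (Φ₁ x - Φ₂ x)) ∂σ :=
          lintegral_mono fun x => enn_tsub_tsub
      _ = (∫⁻ x, (ENNReal.ofReal (p₂ x) - ENNReal.ofReal (p₁ x)) ∂σ)
            + ∫⁻ x, (Φ₁ x - Φ₂ x) ∂σ :=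
          lintegral_add_left (hp₂m.ennreal_ofReal.sub hp₁m.ennreal_ofReal) _
      _ ≤ (∫⁻ x, (ENNReal.ofReal (p₂ x) - ENNReal.ofReal (p₁ x)) ∂σ)
            + ∫⁻ x, ∫⁻ y, (M₁ (x, y) - M₂ (x, y)) ∂σ ∂σ := by
          gcongr with x
          exact lintegral_sub_le _ _ (hM₂m.comp measurable_prodMk_left)
      _ = (∫⁻ x, (ENNReal.ofReal (p₂ x) - ENNReal.ofReal (p₁ x)) ∂σ)
            + ∫⁻ z, (M₁ z - M₂ z) ∂μ2 := by
          rw [hμ2, lintegral_prod (fun z => M₁ z - M₂ z) (hM₁m.sub hM₂m).aemeasurable]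
      _ ≤ c + (c + c) := add_le_add hP21 hM12
  -- decomposition of the MH laws
  have e₁ : prodLaw (σ.withDensity fun x => ENNReal.ofReal (p₁ x)) (mhKernel σ p₁ q₁) S
      = (∫⁻ z in S, M₁ z ∂μ2) + ∫⁻ x in D, H₁ x ∂σ :=
    prodLaw_mhKernel σ p₁ q₁ hp₁m hq₁m hp₁ hq₁ hS
  have e₂ : prodLaw (σ.withDensity fun x => ENNReal.ofReal (p₂ x)) (mhKernel σ p₂ q₂) S
      = (∫⁻ z in S, M₂ z ∂μ2) + ∫⁻ x in D, H₂ x ∂σ :=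
    prodLaw_mhKernel σ p₂ q₂ hp₂m hq₂m hp₂ hq₂ hS
  -- finiteness
  have hMS₁fin : ∫⁻ z in S, M₁ z ∂μ2 ≠ ⊤ := by
    have hle : ∫⁻ z in S, M₁ z ∂μ2 ≤ (1 : ℝ≥0∞) := by
      rw [← hFtot₁]
      calc ∫⁻ z in S, M₁ z ∂μ2 ≤ ∫⁻ z, M₁ z ∂μ2 := setLIntegral_le_lintegral _ _
        _ ≤ ∫⁻ z, F₁ z ∂μ2 :=
          lintegral_mono fun z => ENNReal.ofReal_le_ofReal (min_le_left _ _)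
    exact ne_top_of_le_ne_top one_ne_top hle
  have hMS₂fin : ∫⁻ z in S, M₂ z ∂μ2 ≠ ⊤ := by
    have hle : ∫⁻ z in S, M₂ z ∂μ2 ≤ (1 : ℝ≥0∞) := by
      rw [← hFtot₂]
      calc ∫⁻ z in S, M₂ z ∂μ2 ≤ ∫⁻ z, M₂ z ∂μ2 := setLIntegral_le_lintegral _ _
        _ ≤ ∫⁻ z, F₂ z ∂μ2 :=
          lintegral_mono fun z => ENNReal.ofReal_le_ofReal (min_le_left _ _)
    exact ne_top_of_le_ne_top one_ne_top hle
  have hGS₁fin : ∫⁻ x in D, H₁ x ∂σ ≠ ⊤ := by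
    have hle : ∫⁻ x in D, H₁ x ∂σ ≤ (1 : ℝ≥0∞) := by
      rw [← hp₁i]
      calc ∫⁻ x in D, H₁ x ∂σ ≤ ∫⁻ x, H₁ x ∂σ := setLIntegral_le_lintegral _ _
        _ ≤ ∫⁻ x, ENNReal.ofReal (p₁ x) ∂σ := lintegral_mono fun x => tsub_le_self
    exact ne_top_of_le_ne_top one_ne_top hle
  have hGS₂fin : ∫⁻ x in D, H₂ x ∂σ ≠ ⊤ := by
    have hle : ∫⁻ x in D, H₂ x ∂σ ≤ (1 : ℝ≥0∞) := by
      rw [← hp₂i]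
      calc ∫⁻ x in D, H₂ x ∂σ ≤ ∫⁻ x, H₂ x ∂σ := setLIntegral_le_lintegral _ _
        _ ≤ ∫⁻ x, ENNReal.ofReal (p₂ x) ∂σ := lintegral_mono fun x => tsub_le_self
    exact ne_top_of_le_ne_top one_ne_top hle
  -- cross bounds
  have cross : ∀ (M M' : E × E → ℝ≥0∞), Measurable M' →
      ∫⁻ z in S, M z ∂μ2 ≤ (∫⁻ z in S, M' z ∂μ2) + ∫⁻ z, (M z - M' z) ∂μ2 := by
    intro M M' hM'
    calc ∫⁻ z in S, M z ∂μ2 ≤ ∫⁻ z in S, (M' z + (M z - M' z)) ∂μ2 :=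
          lintegral_mono fun z => le_add_tsub
      _ = (∫⁻ z in S, M' z ∂μ2) + ∫⁻ z in S, (M z - M' z) ∂μ2 :=
          lintegral_add_left hM' _
      _ ≤ (∫⁻ z in S, M' z ∂μ2) + ∫⁻ z, (M z - M' z) ∂μ2 := by
          exact add_le_add le_rfl (setLIntegral_le_lintegral _ _)
  have crossD : ∀ (H H' : E → ℝ≥0∞), Measurable H' →
      ∫⁻ x in D, H x ∂σ ≤ (∫⁻ x in D, H' x ∂σ) + ∫⁻ x, (H x - H' x) ∂σ := by
    intro H H' hH'
    calc ∫⁻ x in D, H x ∂σ ≤ ∫⁻ x in D, (H' x + (H x - H' x)) ∂σ :=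
          lintegral_mono fun x => le_add_tsub
      _ = (∫⁻ x in D, H' x ∂σ) + ∫⁻ x in D, (H x - H' x) ∂σ :=
          lintegral_add_left hH' _
      _ ≤ (∫⁻ x in D, H' x ∂σ) + ∫⁻ x, (H x - H' x) ∂σ := by
          exact add_le_add le_rfl (setLIntegral_le_lintegral _ _)
  have big₁ : (∫⁻ z in S, M₁ z ∂μ2) + ∫⁻ x in D, H₁ x ∂σ
      ≤ ((∫⁻ z in S, M₂ z ∂μ2) + ∫⁻ x in D, H₂ x ∂σ) + ((c + c) + (c + (c + c))) := by
    calc (∫⁻ z in S, M₁ z ∂μ2) + ∫⁻ x in D, H₁ x ∂σ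
        ≤ ((∫⁻ z in S, M₂ z ∂μ2) + ∫⁻ z, (M₁ z - M₂ z) ∂μ2)
            + ((∫⁻ x in D, H₂ x ∂σ) + ∫⁻ x, (H₁ x - H₂ x) ∂σ) :=
          add_le_add (cross M₁ M₂ hM₂m) (crossD H₁ H₂ hH₂m)
      _ ≤ ((∫⁻ z in S, M₂ z ∂μ2) + (c + c))
            + ((∫⁻ x in D, H₂ x ∂σ) + (c + (c + c))) :=
          add_le_add (add_le_add le_rfl hM12) (add_le_add le_rfl hB12)
      _ = ((∫⁻ z in S, M₂ z ∂μ2) + ∫⁻ x in D, H₂ x ∂σ) + ((c + c) + (c + (c + c))) := by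
          ring
  have big₂ : (∫⁻ z in S, M₂ z ∂μ2) + ∫⁻ x in D, H₂ x ∂σ
      ≤ ((∫⁻ z in S, M₁ z ∂μ2) + ∫⁻ x in D, H₁ x ∂σ) + ((c + c) + (c + (c + c))) := by
    calc (∫⁻ z in S, M₂ z ∂μ2) + ∫⁻ x in D, H₂ x ∂σ
        ≤ ((∫⁻ z in S, M₁ z ∂μ2) + ∫⁻ z, (M₂ z - M₁ z) ∂μ2)
            + ((∫⁻ x in D, H₁ x ∂σ) + ∫⁻ x, (H₂ x - H₁ x) ∂σ) :=
          add_le_add (cross M₂ M₁ hM₁m) (crossD H₂ H₁ hH₁m)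
      _ ≤ ((∫⁻ z in S, M₁ z ∂μ2) + (c + c))
            + ((∫⁻ x in D, H₁ x ∂σ) + (c + (c + c))) :=
          add_le_add (add_le_add le_rfl hM21) (add_le_add le_rfl hB21)
      _ = ((∫⁻ z in S, M₁ z ∂μ2) + ∫⁻ x in D, H₁ x ∂σ) + ((c + c) + (c + (c + c))) := by
          ring
  -- pass to real numbers
  have h5c : (c + c) + (c + (c + c)) = ENNReal.ofReal (5 * t) := by
    have h2 : (0:ℝ) ≤ t + t := by linarith
    have h3 : (0:ℝ) ≤ t + (t + t) := by linarith
    rw [hc, ← ENNReal.ofReal_add ht0 ht0, ← ENNReal.ofReal_add ht0 h2,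
      ← ENNReal.ofReal_add h2 h3]
    congr 1
    ring
  have hfin₁ : (∫⁻ z in S, M₁ z ∂μ2) + ∫⁻ x in D, H₁ x ∂σ ≠ ⊤ :=
    ENNReal.add_ne_top.2 ⟨hMS₁fin, hGS₁fin⟩
  have hfin₂ : (∫⁻ z in S, M₂ z ∂μ2) + ∫⁻ x in D, H₂ x ∂σ ≠ ⊤ :=
    ENNReal.add_ne_top.2 ⟨hMS₂fin, hGS₂fin⟩
  have h5fin : ((c + c) + (c + (c + c))) ≠ ⊤ := by rw [h5c]; exact ofReal_ne_top
  have hr₁ : ((∫⁻ z in S, M₁ z ∂μ2) + ∫⁻ x in D, H₁ x ∂σ).toReal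
      ≤ ((∫⁻ z in S, M₂ z ∂μ2) + ∫⁻ x in D, H₂ x ∂σ).toReal + 5 * t := by
    have := ENNReal.toReal_mono (ENNReal.add_ne_top.2 ⟨hfin₂, h5fin⟩) big₁
    rwa [ENNReal.toReal_add hfin₂ h5fin, h5c, ENNReal.toReal_ofReal (by linarith)] at this
  have hr₂ : ((∫⁻ z in S, M₂ z ∂μ2) + ∫⁻ x in D, H₂ x ∂σ).toReal
      ≤ ((∫⁻ z in S, M₁ z ∂μ2) + ∫⁻ x in D, H₁ x ∂σ).toReal + 5 * t := by
    have := ENNReal.toReal_mono (ENNReal.add_ne_top.2 ⟨hfin₁, h5fin⟩) big₂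
    rwa [ENNReal.toReal_add hfin₁ h5fin, h5c, ENNReal.toReal_ofReal (by linarith)] at this
  rw [e₁, e₂, abs_sub_le_iff]
  constructor <;> linarith
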